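/- The first-order theory of the structure ⟨ℤ; +⟩ of integers with addition is not finitely axiomatizable: there is no L_+-sentence φ such that for every nonempty L_+-structure M, M satisfies φ if and only if M is a model of the complete theory of ⟨ℤ; +⟩. -/

import Mathlib

open FirstOrder Language

/-- The language `L_+` with exactly one binary function symbol and no other symbols. -/
inductive AddFunc : ℕ → Type
  | add : AddFunc 2

/-- The language `L_+`. -/
def Ladd : Language := ⟨AddFunc, fun _ => Empty⟩

/-- `ℤ` as an `L_+`-structure, interpreting the binary function symbol as addition. -/
instance : Ladd.Structure ℤ where
  funMap | .add => fun v => v 0 + v 1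
  RelMap := fun {_} r _ => Empty.elim r

section Dev
open Nat

instance prodStructure (p : ℕ) : Ladd.Structure (ℤ × ZMod p) where
  funMap | .add => fun v => v 0 + v 1
  RelMap := fun {_} r _ => Empty.elim r

/-- coefficient of variable `i` in a term -/
def tcoeff {n : ℕ} : Ladd.Term (Empty ⊕ Fin n) → Fin n → ℕ
  | .var (.inl e), _ => e.elim
  | .var (.inr i), j => if j = i then 1 else 0
  | .func .add ts, j => tcoeff (ts 0) j + tcoeff (ts 1) j

def tsize {n : ℕ} : Ladd.Term (Empty ⊕ Fin n) → ℕ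
  | .var _ => 1
  | .func .add ts => tsize (ts 0) + tsize (ts 1)

lemma realize_tcoeff {M : Type} [AddCommMonoid M] [Ladd.Structure M]
    (h : ∀ v : Fin 2 → M, Structure.funMap (L := Ladd) AddFunc.add v = v 0 + v 1)
    {n : ℕ} (ve : Empty → M) (x : Fin n → M) (t : Ladd.Term (Empty ⊕ Fin n)) :
    t.realize (Sum.elim ve x) = ∑ i, tcoeff t i • x i := by
  induction t with
  | var a =>
    rcases a with e | i
    · exact e.elim
    · rw [Term.realize]
      simp [tcoeff]
  | func f ts ih =>
    cases f
    show Structure.funMap (L := Ladd) AddFunc.add (fun i => Term.realize _ (ts i)) = _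
    rw [h]
    show Term.realize _ (ts 0) + Term.realize _ (ts 1) = _
    rw [ih 0, ih 1]
    simp [tcoeff, add_smul, Finset.sum_add_distrib]

lemma sum_tcoeff_le {n : ℕ} (t : Ladd.Term (Empty ⊕ Fin n)) :
    (∑ i, tcoeff t i) ≤ tsize t := by
  induction t with
  | var a =>
    rcases a with e | i
    · exact e.elim
    · simp [tcoeff, tsize]
  | func f ts ih =>
    cases f
    calc (∑ i, (tcoeff (ts 0) i + tcoeff (ts 1) i))
        = (∑ i, tcoeff (ts 0) i) + ∑ i, tcoeff (ts 1) i := by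
          rw [Finset.sum_add_distrib]
      _ ≤ tsize (ts 0) + tsize (ts 1) := _root_.add_le_add (ih 0) (ih 1)

section chunk2
variable {p : ℕ}

/-- The back-and-forth invariant between tuples in `ℤ` and in `ℤ × ZMod p`. -/
def ZInv (p N : ℕ) {n : ℕ} (v : Fin n → ℤ) (w : Fin n → ℤ × ZMod p) : Prop :=
  (∀ c : Fin n → ℤ, (∑ i, (c i).natAbs) ≤ N →
     ((∑ i, c i * v i) = 0 ↔ (∑ i, c i • w i) = 0)) ∧
  ∀ i, ((N ! : ℕ) : ℤ) ∣ (w i).1 - v i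

lemma ZInv.mono {N B : ℕ} (hBN : B ≤ N) {n : ℕ} {v : Fin n → ℤ} {w : Fin n → ℤ × ZMod p}
    (h : ZInv p N v w) : ZInv p B v w := by
  refine ⟨fun c hc => h.1 c (hc.trans hBN), fun i => dvd_trans ?_ (h.2 i)⟩
  exact_mod_cast Int.natCast_dvd_natCast.2 (Nat.factorial_dvd_factorial hBN)

lemma intCast_zmod_ne_zero (hp : p.Prime) {c : ℤ} (hc : c ≠ 0) (hcp : c.natAbs < p) :
    (c : ZMod p) ≠ 0 := by
  intro h
  rw [ZMod.intCast_zmod_eq_zero_iff_dvd] at h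
  have := Int.natCast_dvd.1 h
  have := Nat.le_of_dvd (Int.natAbs_pos.2 hc) this
  omega

lemma smul_eq_zero_prod (hp : p.Prime) {c : ℤ} (hc : c ≠ 0) (hcp : c.natAbs < p)
    (x : ℤ × ZMod p) : c • x = 0 ↔ x = 0 := by
  haveI : Fact p.Prime := ⟨hp⟩
  constructor
  · intro h
    have h1 : c • x.1 = 0 := congrArg Prod.fst h
    have h2 : c • x.2 = 0 := congrArg Prod.snd h
    have h2' : (c : ZMod p) * x.2 = 0 := by rwa [← zsmul_eq_mul]
    have h1' : c * x.1 = 0 := by rwa [smul_eq_mul] at h1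
    have hx1 : x.1 = 0 := (mul_eq_zero.1 h1').resolve_left hc
    have hx2 : x.2 = 0 :=
      (mul_eq_zero.1 h2').resolve_left (intCast_zmod_ne_zero hp hc hcp)
    exact Prod.ext hx1 hx2
  · rintro rfl; simp

lemma c0_fact_dvd {B N : ℕ} (hB : 1 ≤ B) (hBN : 2 * B ^ 2 ≤ N) {c₀ : ℤ} (hc : c₀ ≠ 0)
    (hcB : c₀.natAbs ≤ B) : c₀ * ((B ! : ℕ) : ℤ) ∣ ((N ! : ℕ) : ℤ) := by
  have h1 : c₀.natAbs * B ! ∣ B ! * B ! :=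
    mul_dvd_mul (Nat.dvd_factorial (Int.natAbs_pos.2 hc) hcB) dvd_rfl
  have h2 : B ! * B ! ∣ (B + B)! := Nat.factorial_mul_factorial_dvd_factorial_add B B
  have h3 : (B + B)! ∣ N ! := Nat.factorial_dvd_factorial (by nlinarith)
  have h4 : c₀.natAbs * B ! ∣ N ! := h1.trans (h2.trans h3)
  have h5 := Int.natCast_dvd_natCast.2 h4
  rw [Nat.cast_mul] at h5
  exact dvd_trans (mul_dvd_mul (Int.dvd_natAbs.2 dvd_rfl) dvd_rfl) h5

lemma c0_dvd_fact {B N : ℕ} (hBN : B ≤ N) {c₀ : ℤ} (hc : c₀ ≠ 0)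
    (hcB : c₀.natAbs ≤ B) : c₀ ∣ ((N ! : ℕ) : ℤ) := by
  have h1 : c₀.natAbs ∣ N ! := Nat.dvd_factorial (Int.natAbs_pos.2 hc) (hcB.trans hBN)
  have h2 := Int.natCast_dvd_natCast.2 h1
  rwa [Int.natAbs_dvd] at h2

end chunk2

section chunk3
variable {p : ℕ}

lemma norm_split {n B : ℕ} {d : Fin (n + 1) → ℤ} (hd : (∑ i, (d i).natAbs) ≤ B) :
    (∑ i : Fin n, (d i.castSucc).natAbs) ≤ B ∧ (d (Fin.last n)).natAbs ≤ B := by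
  rw [Fin.sum_univ_castSucc] at hd
  omega

lemma inv_snoc_rel (hp : p.Prime) {N B n : ℕ} (hNp : N < p) (hB : 1 ≤ B) (hBN : 2 * B ^ 2 ≤ N)
    {v : Fin n → ℤ} {w : Fin n → ℤ × ZMod p} (hI : ZInv p N v w)
    {c₀ : ℤ} {c : Fin n → ℤ} (hc₀ : c₀ ≠ 0) (hnorm : c₀.natAbs + ∑ i, (c i).natAbs ≤ B)
    {a : ℤ} {b : ℤ × ZMod p} (ha : c₀ * a = ∑ i, c i * v i) (hb : c₀ • b = ∑ i, c i • w i)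
    (hcong : ((B ! : ℕ) : ℤ) ∣ b.1 - a) :
    ZInv p B (Fin.snoc v a) (Fin.snoc w b) := by
  have hBB : B ≤ N := le_trans (by nlinarith) hBN
  have hc₀B : c₀.natAbs ≤ B := by
    have : 0 ≤ ∑ i, (c i).natAbs := Nat.zero_le _
    omega
  have hcB : (∑ i, (c i).natAbs) ≤ B := by omega
  constructor
  · intro d hd
    simp only [Fin.sum_univ_castSucc, Fin.snoc_castSucc, Fin.snoc_last]
    set d' : Fin n → ℤ := fun i => d i.castSucc with hd'def
    set d₀ : ℤ := d (Fin.last n) with hd₀def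
    obtain ⟨hd'B, hd₀B⟩ := norm_split hd
    have hd'B2 : (∑ i, (d' i).natAbs) ≤ B := hd'B
    have hd₀B2 : d₀.natAbs ≤ B := hd₀B
    set e : Fin n → ℤ := fun i => c₀ * d' i + d₀ * c i with hedef
    have henorm : (∑ i, (e i).natAbs) ≤ N := by
      calc (∑ i, (e i).natAbs)
          ≤ ∑ i, (c₀.natAbs * (d' i).natAbs + d₀.natAbs * (c i).natAbs) := by
            apply Finset.sum_le_sum
            intro i _
            calc (c₀ * d' i + d₀ * c i).natAbs
                ≤ (c₀ * d' i).natAbs + (d₀ * c i).natAbs := Int.natAbs_add_le _ _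
              _ = c₀.natAbs * (d' i).natAbs + d₀.natAbs * (c i).natAbs := by
                  rw [Int.natAbs_mul, Int.natAbs_mul]
        _ = c₀.natAbs * (∑ i, (d' i).natAbs) + d₀.natAbs * (∑ i, (c i).natAbs) := by
            rw [Finset.sum_add_distrib, Finset.mul_sum, Finset.mul_sum]
        _ ≤ B * B + B * B := by
            apply _root_.add_le_add <;> exact Nat.mul_le_mul (by omega) (by omega)
        _ ≤ N := by nlinarith
    have key : (∑ i, e i * v i) = c₀ * ((∑ i, d' i * v i) + d₀ * a) := by
      calc (∑ i, e i * v i)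
          = ∑ i, (c₀ * (d' i * v i) + d₀ * (c i * v i)) := by
            apply Finset.sum_congr rfl; intro i _; rw [hedef]; ring
        _ = c₀ * (∑ i, d' i * v i) + d₀ * (∑ i, c i * v i) := by
            rw [Finset.sum_add_distrib, Finset.mul_sum, Finset.mul_sum]
        _ = c₀ * ((∑ i, d' i * v i) + d₀ * a) := by rw [← ha]; ring
    have keyw : (∑ i, e i • w i) = c₀ • ((∑ i, d' i • w i) + d₀ • b) := by
      calc (∑ i, e i • w i)
          = ∑ i, (c₀ • (d' i • w i) + d₀ • (c i • w i)) := by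
            apply Finset.sum_congr rfl; intro i _
            rw [hedef, add_smul, smul_smul, smul_smul]
        _ = c₀ • (∑ i, d' i • w i) + d₀ • (∑ i, c i • w i) := by
            rw [Finset.sum_add_distrib, Finset.smul_sum, Finset.smul_sum]
        _ = c₀ • ((∑ i, d' i • w i) + d₀ • b) := by
            rw [← hb, smul_add, smul_smul, smul_smul, mul_comm]
    constructor
    · intro h
      have h1 : (∑ i, e i * v i) = 0 := by rw [key, h, mul_zero]
      have h2 := (hI.1 e henorm).1 h1
      rw [keyw] at h2
      exact (smul_eq_zero_prod hp hc₀ (by omega) _).1 h2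
    · intro h
      have h1 : (∑ i, e i • w i) = 0 := by rw [keyw, h, smul_zero]
      have h2 := (hI.1 e henorm).2 h1
      rw [key, _root_.mul_eq_zero] at h2
      exact h2.resolve_left hc₀
  · intro i
    refine Fin.lastCases ?_ ?_ i
    · simpa [Fin.snoc_last] using hcong
    · intro j
      simp only [Fin.snoc_castSucc]
      refine dvd_trans ?_ (hI.2 j)
      exact_mod_cast Int.natCast_dvd_natCast.2 (Nat.factorial_dvd_factorial hBB)

lemma inv_snoc_generic {N B n : ℕ} (hB : 1 ≤ B) (hBN : B ≤ N)
    {v : Fin n → ℤ} {w : Fin n → ℤ × ZMod p} (hI : ZInv p N v w) {a : ℤ} {b : ℤ × ZMod p}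
    (hfv : ∀ (c₀ : ℤ) (c : Fin n → ℤ), c₀ ≠ 0 → c₀.natAbs + (∑ i, (c i).natAbs) ≤ B →
      c₀ * a ≠ ∑ i, c i * v i)
    (hfw : ∀ (c₀ : ℤ) (c : Fin n → ℤ), c₀ ≠ 0 → c₀.natAbs + (∑ i, (c i).natAbs) ≤ B →
      c₀ • b ≠ ∑ i, c i • w i)
    (hcong : ((B ! : ℕ) : ℤ) ∣ b.1 - a) :
    ZInv p B (Fin.snoc v a) (Fin.snoc w b) := by
  constructor
  · intro d hd
    simp only [Fin.sum_univ_castSucc, Fin.snoc_castSucc, Fin.snoc_last]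
    set d' : Fin n → ℤ := fun i => d i.castSucc with hd'def
    set d₀ : ℤ := d (Fin.last n) with hd₀def
    obtain ⟨hd'B, hd₀B⟩ := norm_split hd
    have hd'B2 : (∑ i, (d' i).natAbs) ≤ B := hd'B
    have hd₀B2 : d₀.natAbs ≤ B := hd₀B
    by_cases hd₀ : d₀ = 0
    · rw [hd₀]
      simp only [zero_mul, add_zero, zero_smul]
      exact hI.1 d' (hd'B.trans hBN)
    · have hnn : (-d₀).natAbs + (∑ i, (d' i).natAbs) ≤ B := by
        rw [Int.natAbs_neg]
        rw [Fin.sum_univ_castSucc (f := fun i => (d i).natAbs)] at hd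
        have hsum : (∑ i : Fin n, (d' i).natAbs) = ∑ i : Fin n, (d i.castSucc).natAbs := rfl
        rw [hsum]
        omega
      refine iff_of_false ?_ ?_
      · intro h
        apply hfv (-d₀) d' (neg_ne_zero.2 hd₀) hnn
        have hsum : (∑ i : Fin n, d' i * v i) = ∑ i : Fin n, d i.castSucc * v i := rfl
        rw [neg_mul, hsum]
        linarith
      · intro h
        apply hfw (-d₀) d' (neg_ne_zero.2 hd₀) hnn
        have h' : d₀ • b = -(∑ i : Fin n, d i.castSucc • w i) := by
          rw [eq_neg_iff_add_eq_zero, add_comm]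
          exact h
        have hsum : (∑ i : Fin n, d' i • w i) = ∑ i : Fin n, d i.castSucc • w i := rfl
        rw [neg_smul, h', neg_neg, hsum]
  · intro i
    refine Fin.lastCases ?_ ?_ i
    · simpa [Fin.snoc_last] using hcong
    · intro j
      simp only [Fin.snoc_castSucc]
      refine dvd_trans ?_ (hI.2 j)
      exact_mod_cast Int.natCast_dvd_natCast.2 (Nat.factorial_dvd_factorial hBN)

end chunk3

section chunk4
variable {p : ℕ}

lemma fst_sum_smul {n : ℕ} (c : Fin n → ℤ) (w : Fin n → ℤ × ZMod p) :
    (∑ i, c i • w i).1 = ∑ i, c i * (w i).1 := by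
  rw [Prod.fst_sum]
  apply Finset.sum_congr rfl
  intro i _
  rw [Prod.smul_fst, smul_eq_mul]

lemma dvd_sum_sub {N n : ℕ} {v : Fin n → ℤ} {w : Fin n → ℤ × ZMod p}
    (hI : ZInv p N v w) (c : Fin n → ℤ) :
    ((N ! : ℕ) : ℤ) ∣ (∑ i, c i * (w i).1) - ∑ i, c i * v i := by
  rw [← Finset.sum_sub_distrib]
  apply Finset.dvd_sum
  intro i _
  rw [← mul_sub]
  exact dvd_mul_of_dvd_right (hI.2 i) _

lemma no_rel_of_large {n : ℕ} (u : Fin n → ℤ) (r : ℤ) {B : ℕ} (hB : 1 ≤ B)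
    {c₀ : ℤ} {c : Fin n → ℤ} (hc₀ : c₀ ≠ 0) (hn : c₀.natAbs + ∑ i, (c i).natAbs ≤ B) :
    c₀ * (r + ((B ! : ℕ) : ℤ) * (((B * ∑ i, (u i).natAbs : ℕ) : ℤ) + |r| + 1)) ≠
      ∑ i, c i * u i := by
  intro heq
  set T : ℤ := ((B * ∑ i, (u i).natAbs : ℕ) : ℤ) + |r| + 1 with hT
  set aa : ℤ := r + ((B ! : ℕ) : ℤ) * T with haa
  have hT1 : ((B * ∑ i, (u i).natAbs : ℕ) : ℤ) + 1 ≤ T := by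
    have := abs_nonneg r
    omega
  have hTpos : 0 ≤ T := by positivity
  -- bound on the sum
  have hnat : (∑ i, (c i * u i).natAbs) ≤ B * ∑ i, (u i).natAbs := by
    calc (∑ i, (c i * u i).natAbs) = ∑ i, (c i).natAbs * (u i).natAbs := by
          apply Finset.sum_congr rfl; intro i _; exact Int.natAbs_mul _ _
      _ ≤ ∑ i, B * (u i).natAbs := by
          apply Finset.sum_le_sum; intro i _
          apply Nat.mul_le_mul_right
          have hle : (c i).natAbs ≤ ∑ j, (c j).natAbs :=
            Finset.single_le_sum (f := fun j => (c j).natAbs) (fun j _ => Nat.zero_le _) (Finset.mem_univ i)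
          omega
      _ = B * ∑ i, (u i).natAbs := by rw [Finset.mul_sum]
  have hsum_le : |∑ i, c i * u i| ≤ ((B * ∑ i, (u i).natAbs : ℕ) : ℤ) := by
    calc |∑ i, c i * u i| ≤ ∑ i, |c i * u i| := Finset.abs_sum_le_sum_abs _ _
      _ = ((∑ i, (c i * u i).natAbs : ℕ) : ℤ) := by
          rw [Nat.cast_sum]
          apply Finset.sum_congr rfl
          intro i _
          exact (Int.abs_eq_natAbs _)
      _ ≤ _ := by exact_mod_cast hnat
  -- bound on aa
  have hfac : (1 : ℤ) ≤ ((B ! : ℕ) : ℤ) := by exact_mod_cast Nat.one_le_iff_ne_zero.2 (Nat.factorial_ne_zero B)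
  have hTle : T ≤ ((B ! : ℕ) : ℤ) * T := le_mul_of_one_le_left hTpos hfac
  have htri : ((B ! : ℕ) : ℤ) * T ≤ |aa| + |r| := by
    have h1 : ((B ! : ℕ) : ℤ) * T = aa - r := by rw [haa]; ring
    calc ((B ! : ℕ) : ℤ) * T = |((B ! : ℕ) : ℤ) * T| := by
          rw [abs_of_nonneg (by positivity)]
      _ = |aa - r| := by rw [h1]
      _ ≤ |aa| + |r| := abs_sub _ _
  have hone : (1 : ℤ) ≤ |c₀| := Int.one_le_abs hc₀
  have habs : |aa| ≤ |c₀ * aa| := by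
    rw [abs_mul]
    nlinarith [abs_nonneg aa]
  have heqabs : |c₀ * aa| = |∑ i, c i * u i| := by rw [heq]
  omega

lemma extend_b (hp : p.Prime) {N B n : ℕ} (hNp : N < p) (hB : 1 ≤ B) (hBN : 2 * B ^ 2 ≤ N)
    {v : Fin n → ℤ} {w : Fin n → ℤ × ZMod p} (hI : ZInv p N v w) (b : ℤ × ZMod p) :
    ∃ a : ℤ, ZInv p B (Fin.snoc v a) (Fin.snoc w b) := by
  have hBB : B ≤ N := le_trans (by nlinarith) hBN
  by_cases hrel : ∃ (c₀ : ℤ) (c : Fin n → ℤ), c₀ ≠ 0 ∧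
      (c₀.natAbs + ∑ i, (c i).natAbs ≤ B) ∧ c₀ • b = ∑ i, c i • w i
  · obtain ⟨c₀, c, hc₀, hn, hb⟩ := hrel
    have hc₀B : c₀.natAbs ≤ B := by
      have : 0 ≤ ∑ i, (c i).natAbs := Nat.zero_le _
      omega
    have hfst : c₀ * b.1 = ∑ i, c i * (w i).1 := by
      have h := congrArg Prod.fst hb
      rw [Prod.smul_fst, smul_eq_mul] at h
      rw [h, fst_sum_smul]
    obtain ⟨K, hK⟩ := dvd_sum_sub hI c
    have hdvd : c₀ ∣ ∑ i, c i * v i := by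
      have hx : (∑ i, c i * v i) = c₀ * b.1 - ((N ! : ℕ) : ℤ) * K := by
        rw [← hK, hfst]; ring
      rw [hx]
      exact dvd_sub (Dvd.intro _ rfl) ((c0_dvd_fact hBB hc₀ hc₀B).mul_right K)
    set a : ℤ := (∑ i, c i * v i) / c₀ with hadef
    have ha : c₀ * a = ∑ i, c i * v i := Int.mul_ediv_cancel' hdvd
    obtain ⟨t, ht⟩ := c0_fact_dvd hB hBN hc₀ hc₀B
    have hcong : ((B ! : ℕ) : ℤ) ∣ b.1 - a := by
      have hkey : c₀ * (b.1 - a) = ((N ! : ℕ) : ℤ) * K := by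
        rw [mul_sub, ha, hfst]
        linarith [hK]
      refine ⟨t * K, ?_⟩
      apply mul_left_cancel₀ hc₀
      rw [hkey, ht]; ring
    exact ⟨a, inv_snoc_rel hp hNp hB hBN hI hc₀ hn ha hb hcong⟩
  · push_neg at hrel
    set T : ℤ := ((B * ∑ i, (v i).natAbs : ℕ) : ℤ) + |b.1| + 1 with hT
    refine ⟨b.1 + ((B ! : ℕ) : ℤ) * T, inv_snoc_generic hB hBB hI ?_ ?_ ?_⟩
    · intro c₀ c hc₀ hn heq
      exact no_rel_of_large v b.1 hB hc₀ hn heq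
    · intro c₀ c hc₀ hn heq
      exact hrel c₀ c hc₀ hn heq
    · refine ⟨-T, ?_⟩; ring

lemma extend_a (hp : p.Prime) {N B n : ℕ} (hNp : N < p) (hB : 1 ≤ B) (hBN : 2 * B ^ 2 ≤ N)
    {v : Fin n → ℤ} {w : Fin n → ℤ × ZMod p} (hI : ZInv p N v w) (a : ℤ) :
    ∃ b : ℤ × ZMod p, ZInv p B (Fin.snoc v a) (Fin.snoc w b) := by
  haveI : Fact p.Prime := ⟨hp⟩
  have hBB : B ≤ N := le_trans (by nlinarith) hBN
  by_cases hrel : ∃ (c₀ : ℤ) (c : Fin n → ℤ), c₀ ≠ 0 ∧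
      (c₀.natAbs + ∑ i, (c i).natAbs ≤ B) ∧ c₀ * a = ∑ i, c i * v i
  · obtain ⟨c₀, c, hc₀, hn, ha⟩ := hrel
    have hc₀B : c₀.natAbs ≤ B := by
      have : 0 ≤ ∑ i, (c i).natAbs := Nat.zero_le _
      omega
    obtain ⟨K, hK⟩ := dvd_sum_sub hI c
    obtain ⟨t, ht⟩ := c0_fact_dvd hB hBN hc₀ hc₀B
    set b1 : ℤ := a + ((B ! : ℕ) : ℤ) * (t * K) with hb1def
    have hb1 : c₀ * b1 = ∑ i, c i * (w i).1 := by
      have hw : (∑ i, c i * (w i).1) = (∑ i, c i * v i) + ((N ! : ℕ) : ℤ) * K := by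
        linarith [hK]
      rw [hw, ← ha, ht, hb1def]; ring
    have hu : ((c₀ : ZMod p)) ≠ 0 := intCast_zmod_ne_zero hp hc₀ (by omega)
    set b2 : ZMod p := (c₀ : ZMod p)⁻¹ * (∑ i, c i • w i).2 with hb2def
    set b : ℤ × ZMod p := (b1, b2) with hbdef
    have hb : c₀ • b = ∑ i, c i • w i := by
      apply Prod.ext
      · rw [Prod.smul_fst, smul_eq_mul]
        show c₀ * b1 = _
        rw [hb1, fst_sum_smul]
      · rw [Prod.smul_snd]
        show c₀ • b2 = _
        rw [zsmul_eq_mul, hb2def, mul_inv_cancel_left₀ hu]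
    have hcong : ((B ! : ℕ) : ℤ) ∣ b.1 - a := ⟨t * K, by show b1 - a = _; rw [hb1def]; ring⟩
    exact ⟨b, inv_snoc_rel hp hNp hB hBN hI hc₀ hn ha hb hcong⟩
  · push_neg at hrel
    set T : ℤ := ((B * ∑ i, ((w i).1).natAbs : ℕ) : ℤ) + |a| + 1 with hT
    set b : ℤ × ZMod p := (a + ((B ! : ℕ) : ℤ) * T, 0) with hbdef
    refine ⟨b, inv_snoc_generic hB hBB hI ?_ ?_ ?_⟩
    · intro c₀ c hc₀ hn heq
      exact hrel c₀ c hc₀ hn heq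
    · intro c₀ c hc₀ hn heq
      have h := congrArg Prod.fst heq
      rw [Prod.smul_fst, smul_eq_mul, fst_sum_smul] at h
      exact no_rel_of_large (fun i => (w i).1) a hB hc₀ hn h
    · show ((B ! : ℕ) : ℤ) ∣ b.1 - a
      refine ⟨T, ?_⟩
      show a + ((B ! : ℕ) : ℤ) * T - a = _
      ring

section chunk5

/-- A bound on the "coefficient complexity" of a formula. -/
def fbound : ∀ {n : ℕ}, Ladd.BoundedFormula Empty n → ℕ
  | _, .falsum => 1
  | _, .equal t₁ t₂ => tsize t₁ + tsize t₂
  | _, .rel _ _ => 1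
  | _, .imp f g => max (fbound f) (fbound g)
  | _, .all f => 2 * (fbound f) ^ 2

lemma one_le_tsize {n : ℕ} (t : Ladd.Term (Empty ⊕ Fin n)) : 1 ≤ tsize t := by
  induction t with
  | var a => simp [tsize]
  | func f ts ih =>
    cases f
    have := ih 0
    have := ih 1
    show 1 ≤ tsize (ts 0) + tsize (ts 1)
    omega

lemma one_le_fbound {n : ℕ} (ff : Ladd.BoundedFormula Empty n) : 1 ≤ fbound ff := by
  induction ff with
  | falsum => exact le_refl 1
  | equal t₁ t₂ =>
    have := one_le_tsize t₁
    have := one_le_tsize t₂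
    show 1 ≤ tsize t₁ + tsize t₂
    omega
  | rel R ts => exact le_refl 1
  | imp f₁ g₁ ih₁ ih₂ => exact le_trans ih₁ (le_max_left _ _)
  | all f₁ ih =>
    show 1 ≤ 2 * (fbound f₁) ^ 2
    nlinarith

lemma transfer {p : ℕ} (hp : p.Prime) :
    ∀ {n : ℕ} (ff : Ladd.BoundedFormula Empty n),
    ∀ (N : ℕ), fbound ff ≤ N → N < p → ∀ (v : Fin n → ℤ) (w : Fin n → ℤ × ZMod p),
      ZInv p N v w →
      (ff.Realize (fun e => e.elim) v ↔ ff.Realize (fun e => e.elim) w) := by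
  intro n ff
  induction ff with
  | falsum =>
    intro N _ _ v w _
    simp [BoundedFormula.Realize]
  | equal t₁ t₂ =>
    intro N hN hNp v w hI
    have hfz : ∀ (x : Fin 2 → ℤ), Structure.funMap (L := Ladd) AddFunc.add x = x 0 + x 1 :=
      fun _ => rfl
    have hfw : ∀ (x : Fin 2 → ℤ × ZMod p), Structure.funMap (L := Ladd) AddFunc.add x = x 0 + x 1 :=
      fun _ => rfl
    show t₁.realize _ = t₂.realize _ ↔ t₁.realize _ = t₂.realize _
    rw [realize_tcoeff hfz _ v t₁, realize_tcoeff hfz _ v t₂,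
      realize_tcoeff hfw _ w t₁, realize_tcoeff hfw _ w t₂]
    set c := fun i => (tcoeff t₁ i : ℤ) - (tcoeff t₂ i : ℤ) with hc
    have hcnorm : (∑ i, (c i).natAbs) ≤ N := by
      refine le_trans ?_ (le_trans (show fbound (t₁.bdEqual t₂) ≤ N from hN) (le_refl N))
      show (∑ i, (c i).natAbs) ≤ tsize t₁ + tsize t₂
      calc (∑ i, (c i).natAbs) ≤ ∑ i, (tcoeff t₁ i + tcoeff t₂ i) := by
            apply Finset.sum_le_sum
            intro i _
            rw [hc]
            have := Int.natAbs_sub_le ((tcoeff t₁ i : ℤ)) ((tcoeff t₂ i : ℤ))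
            simpa using this
        _ = (∑ i, tcoeff t₁ i) + ∑ i, tcoeff t₂ i := Finset.sum_add_distrib
        _ ≤ tsize t₁ + tsize t₂ := _root_.add_le_add (sum_tcoeff_le t₁) (sum_tcoeff_le t₂)
    have hiff := hI.1 c hcnorm
    constructor
    · intro h
      have hz : (∑ i, c i * v i) = 0 := by
        have : (∑ i, c i * v i) = (∑ i, tcoeff t₁ i • v i) - ∑ i, tcoeff t₂ i • v i := by
          rw [← Finset.sum_sub_distrib]
          apply Finset.sum_congr rfl
          intro i _
          rw [hc]
          push_cast
          ring
        rw [this, h, sub_self]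
      have hw := hiff.1 hz
      have : (∑ i, c i • w i) = (∑ i, tcoeff t₁ i • w i) - ∑ i, tcoeff t₂ i • w i := by
        rw [← Finset.sum_sub_distrib]
        apply Finset.sum_congr rfl
        intro i _
        rw [hc, sub_smul, natCast_zsmul, natCast_zsmul]
      rw [this] at hw
      exact sub_eq_zero.1 hw
    · intro h
      have hwz : (∑ i, c i • w i) = 0 := by
        have : (∑ i, c i • w i) = (∑ i, tcoeff t₁ i • w i) - ∑ i, tcoeff t₂ i • w i := by
          rw [← Finset.sum_sub_distrib]
          apply Finset.sum_congr rfl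
          intro i _
          rw [hc, sub_smul, natCast_zsmul, natCast_zsmul]
        rw [this, h, sub_self]
      have hv := hiff.2 hwz
      have : (∑ i, c i * v i) = (∑ i, tcoeff t₁ i • v i) - ∑ i, tcoeff t₂ i • v i := by
        rw [← Finset.sum_sub_distrib]
        apply Finset.sum_congr rfl
        intro i _
        rw [hc]
        push_cast
        ring
      rw [this] at hv
      exact sub_eq_zero.1 hv
  | rel R ts => exact Empty.elim R
  | imp f₁ g₁ ih₁ ih₂ =>
    intro N hN hNp v w hI
    have h₁ : fbound f₁ ≤ N := le_trans (le_max_left _ _) hN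
    have h₂ : fbound g₁ ≤ N := le_trans (le_max_right _ _) hN
    rw [BoundedFormula.realize_imp, BoundedFormula.realize_imp]
    exact imp_congr (ih₁ N h₁ hNp v w hI) (ih₂ N h₂ hNp v w hI)
  | all f₁ ih =>
    intro N hN hNp v w hI
    set B : ℕ := fbound f₁ with hBdef
    have hB : 1 ≤ B := one_le_fbound f₁
    have hBN : 2 * B ^ 2 ≤ N := hN
    have hBp : B < p := by nlinarith
    rw [BoundedFormula.realize_all, BoundedFormula.realize_all]
    constructor
    · intro h b
      obtain ⟨a, hab⟩ := extend_b hp hNp hB hBN hI b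
      exact (ih B (le_refl B) hBp _ _ hab).1 (h a)
    · intro h a
      obtain ⟨b, hab⟩ := extend_a hp hNp hB hBN hI a
      exact (ih B (le_refl B) hBp _ _ hab).2 (h b)

end chunk5


section chunk6

def xvar : Ladd.Term (Empty ⊕ Fin 1) := Term.var (Sum.inr 0)

def addt (t₁ t₂ : Ladd.Term (Empty ⊕ Fin 1)) : Ladd.Term (Empty ⊕ Fin 1) :=
  Term.func AddFunc.add ![t₁, t₂]

def nmul : ℕ → Ladd.Term (Empty ⊕ Fin 1) → Ladd.Term (Empty ⊕ Fin 1)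
  | 0, t => t
  | k + 1, t => addt t (nmul k t)

lemma realize_nmul {M : Type} [AddCommMonoid M] [Ladd.Structure M]
    (h : ∀ x : Fin 2 → M, Structure.funMap (L := Ladd) AddFunc.add x = x 0 + x 1)
    (k : ℕ) (t : Ladd.Term (Empty ⊕ Fin 1)) (asg : Empty ⊕ Fin 1 → M) :
    (nmul k t).realize asg = (k + 1) • t.realize asg := by
  induction k with
  | zero =>
    show t.realize asg = (0 + 1) • t.realize asg
    rw [zero_add, one_smul]
  | succ k ih =>
    show Term.realize asg (Term.func AddFunc.add ![t, nmul k t]) = _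
    show Structure.funMap (L := Ladd) AddFunc.add (fun i => Term.realize asg (![t, nmul k t] i)) = _
    rw [h]
    simp only [Matrix.cons_val_zero, Matrix.cons_val_one, Matrix.head_cons]
    rw [ih]
    have hs : (k + 1 + 1) • t.realize asg = (k + 1) • t.realize asg + t.realize asg :=
      succ_nsmul _ _
    rw [hs]
    abel

lemma realize_addt {M : Type} [AddCommMonoid M] [Ladd.Structure M]
    (h : ∀ x : Fin 2 → M, Structure.funMap (L := Ladd) AddFunc.add x = x 0 + x 1)
    (t₁ t₂ : Ladd.Term (Empty ⊕ Fin 1)) (asg : Empty ⊕ Fin 1 → M) :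
    (addt t₁ t₂).realize asg = t₁.realize asg + t₂.realize asg := by
  rw [addt]
  show Structure.funMap (L := Ladd) AddFunc.add (fun i => Term.realize asg (![t₁, t₂] i)) = _
  rw [h]
  simp only [Matrix.cons_val_zero, Matrix.cons_val_one, Matrix.head_cons]

lemma realize_equal' {M : Type} [Ladd.Structure M] {k : ℕ}
    (t₁ t₂ : Ladd.Term (Empty ⊕ Fin k)) (v : Empty → M) (xs : Fin k → M) :
    (BoundedFormula.equal t₁ t₂).Realize v xs ↔
      t₁.realize (Sum.elim v xs) = t₂.realize (Sum.elim v xs) :=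
  Iff.rfl

/-- The sentence `∀ x, p • x = 0 → x = 0` (with `y = 0` expressed as `y + y = y`). -/
def distSent (p : ℕ) : Ladd.Sentence :=
  BoundedFormula.all
    ((BoundedFormula.equal (addt (nmul (p - 1) xvar) (nmul (p - 1) xvar)) (nmul (p - 1) xvar)).imp
      (BoundedFormula.equal (addt xvar xvar) xvar))

lemma realize_distSent_iff {M : Type} [AddCommMonoid M] [Ladd.Structure M]
    (h : ∀ x : Fin 2 → M, Structure.funMap (L := Ladd) AddFunc.add x = x 0 + x 1)
    {p : ℕ} (hp : 1 ≤ p) :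
    (M ⊨ distSent p) ↔ ∀ a : M, (p • a + p • a = p • a → a + a = a) := by
  have hx : ∀ (a : M) (xs : Fin 0 → M),
      xvar.realize (Sum.elim (default : Empty → M) (Fin.snoc xs a)) = a := by
    intro a xs
    show Term.realize _ (Term.var (Sum.inr 0)) = a
    exact rfl
  show BoundedFormula.Realize (distSent p) (default : Empty → M) (default : Fin 0 → M) ↔ _
  rw [distSent, BoundedFormula.realize_all]
  apply forall_congr'
  intro a
  rw [BoundedFormula.realize_imp, realize_equal', realize_equal',
    realize_addt h, realize_addt h, realize_nmul h, hx a default]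
  have hpp : p - 1 + 1 = p := by omega
  rw [hpp]

lemma int_realize_distSent {p : ℕ} (hp : 1 ≤ p) : (ℤ : Type) ⊨ distSent p := by
  rw [realize_distSent_iff (fun _ => rfl) hp]
  intro a h
  have h1 : (p : ℤ) * a + (p : ℤ) * a = (p : ℤ) * a := by
    rw [← nsmul_eq_mul]
    exact h
  have h2 : (p : ℤ) * a = 0 := by linarith
  have hpz : (p : ℤ) ≠ 0 := by exact_mod_cast Nat.one_le_iff_ne_zero.1 hp
  have h3 : a = 0 := by
    rcases mul_eq_zero.1 h2 with h | h
    · exact absurd h hpz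
    · exact h
  rw [h3]
  exact add_zero 0

lemma prod_not_realize_distSent {p : ℕ} (hp : p.Prime) :
    ¬ ((ℤ × ZMod p) ⊨ distSent p) := by
  haveI : Fact p.Prime := ⟨hp⟩
  haveI : Fact (1 < p) := ⟨hp.one_lt⟩
  rw [realize_distSent_iff (fun _ => rfl) hp.pos]
  intro h
  have := h ((0 : ℤ), (1 : ZMod p))
  have hps : p • ((0 : ℤ), (1 : ZMod p)) = (0, 0) := by
    apply Prod.ext
    · simp
    · show p • (1 : ZMod p) = 0
      rw [nsmul_eq_mul, mul_one, ZMod.natCast_self]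
  rw [hps] at this
  have h2 := this (by simp)
  have h3 : (1 : ZMod p) + 1 = 1 := congrArg Prod.snd h2
  have h4 : (1 : ZMod p) + 1 = 0 + 1 := by rw [zero_add]; exact h3
  exact one_ne_zero (add_right_cancel h4)

lemma zinv_zero (p N : ℕ) (v : Fin 0 → ℤ) (w : Fin 0 → ℤ × ZMod p) : ZInv p N v w := by
  constructor
  · intro c _
    simp
  · intro i
    exact i.elim0

lemma realize_irrel {M : Type} [Ladd.Structure M] (sφ : Ladd.Sentence)
    (v v' : Empty → M) (xs xs' : Fin 0 → M) :
    BoundedFormula.Realize sφ v xs ↔ BoundedFormula.Realize sφ v' xs' := by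
  have hv : v = v' := funext fun e => e.elim
  have hxs : xs = xs' := funext fun i => i.elim0
  rw [hv, hxs]

lemma transfer_sentence {p : ℕ} (hp : p.Prime) (sφ : Ladd.Sentence) (hsφ : fbound sφ < p) :
    ((ℤ : Type) ⊨ sφ) ↔ ((ℤ × ZMod p) ⊨ sφ) := by
  have key := transfer hp sφ (fbound sφ) le_rfl hsφ default default (zinv_zero p (fbound sφ) _ _)
  have e1 : (fun e : Empty => e.elim : Empty → ℤ) = default := funext fun e => e.elim
  have e2 : (fun e : Empty => e.elim : Empty → ℤ × ZMod p) = default := funext fun e => e.elim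
  have t1 : ((ℤ : Type) ⊨ sφ) ↔
      BoundedFormula.Realize sφ (fun e : Empty => e.elim) (default : Fin 0 → ℤ) :=
    realize_irrel sφ _ _ _ _
  have t2 : (((ℤ × ZMod p) : Type) ⊨ sφ) ↔
      BoundedFormula.Realize sφ (fun e : Empty => e.elim) (default : Fin 0 → ℤ × ZMod p) :=
    realize_irrel sφ _ _ _ _
  exact t1.trans (key.trans t2.symm)

end chunk6


end chunk4

end Dev

/-- **The theory of `⟨ℤ; +⟩` is not finitely axiomatizable**: there is no single
`L_+`-sentence whose models (among nonempty `L_+`-structures) are exactly the models of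
the complete theory of `⟨ℤ; +⟩`. -/
theorem Int_add_not_finitely_axiomatizable :
    ¬ ∃ φ : Ladd.Sentence,
      ∀ (M : Type) [Nonempty M] [Ladd.Structure M],
        (M ⊨ φ ↔ M ⊨ Ladd.completeTheory ℤ) := by
  rintro ⟨φ, hφ⟩
  have hZφ : (ℤ : Type) ⊨ φ := (hφ ℤ).2 inferInstance
  obtain ⟨p, hple, hp⟩ := Nat.exists_infinite_primes (fbound φ + 1)
  haveI : Fact p.Prime := ⟨hp⟩
  have hlt : fbound φ < p := by omega
  have hMφ : (ℤ × ZMod p) ⊨ φ := (transfer_sentence hp φ hlt).1 hZφ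
  haveI : Nonempty (ℤ × ZMod p) := ⟨(0, 0)⟩
  have hMT : (ℤ × ZMod p) ⊨ Ladd.completeTheory ℤ := (hφ (ℤ × ZMod p)).1 hMφ
  have hmem : distSent p ∈ Ladd.completeTheory ℤ :=
    mem_completeTheory.2 (int_realize_distSent hp.pos)
  have hbad : (ℤ × ZMod p) ⊨ distSent p :=
    Theory.realize_sentence_of_mem (T := Ladd.completeTheory ℤ) hmem
  exact prod_not_realize_distSent hp hbad
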